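/- Let G be a group and H ≤ G. For all ordinals α ≤ λ, Z_α(E_α(H)) ≤ E_λ(H); that is, the α-th hypercenter of the α-th envelope is contained in every later envelope. -/

import Mathlib

open Ordinal

section Defs
variable {G : Type*} [Group G]

attribute [local instance] Classical.propDecidable

/-- The commutator `[x,y] = x⁻¹y⁻¹xy` as in the paper. -/
def pcomm (x y : G) : G := x⁻¹ * y⁻¹ * x * y

/-- Transfinite upper central series of the (sub)set `E` of `G`, viewed inside `G`. -/
noncomputable def ZSet (E : Set G) (α : Ordinal) : Set G :=
  if α = 0 then {1}
  else if hs : ∃ β < α, α = β + 1 then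
    {x | x ∈ E ∧ ∀ g ∈ E, pcomm x g ∈ ZSet E hs.choose}
  else ⋃ (β : Ordinal) (_ : β < α), ZSet E β
termination_by α
decreasing_by all_goals first | assumption | exact hs.choose_spec.1

/-- Transfinite iterated centralizers `C_E^α(H)` of `H` inside the ambient set `E ⊆ G`. -/
noncomputable def CIter (E H : Set G) (α : Ordinal) : Set G :=
  if α = 0 then {1}
  else if hs : ∃ β < α, α = β + 1 then
    {x | x ∈ E ∧ (∀ β < α, ∀ a : G, a ∈ CIter E H β ↔ x * a * x⁻¹ ∈ CIter E H β)
       ∧ ∀ h ∈ H, pcomm x h ∈ CIter E H hs.choose}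
  else ⋃ (β : Ordinal) (_ : β < α), CIter E H β
termination_by α
decreasing_by all_goals first | assumption | exact hs.choose_spec.1

/-- Transfinite envelopes `E_α(H)` of `H ⊆ G`. -/
noncomputable def Env (H : Set G) (α : Ordinal) : Set G :=
  if α = 0 then Set.univ
  else if hs : ∃ β < α, α = β + 1 then
    {g | g ∈ Env H hs.choose ∧
      ∀ c ∈ CIter (Env H hs.choose) H (hs.choose + 1),
        pcomm g c ∈ CIter (Env H hs.choose) H hs.choose}
  else ⋂ (β : Ordinal) (_ : β < α), Env H β
termination_by α
decreasing_by all_goals first | assumption | exact hs.choose_spec.1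

end Defs

section Proofs
universe v
variable {G : Type*} [Group G] {S : Set G}

attribute [local instance] Classical.propDecidable

/-! ### Ordinal.{v} helpers -/

private lemma succ_cancel {a b : Ordinal.{v}} (h : a + 1 = b + 1) : a = b := by
  rwa [Ordinal.add_one_eq_succ, Ordinal.add_one_eq_succ, Order.succ_eq_succ_iff] at h

private lemma lt_succ' (a : Ordinal.{v}) : a < a + 1 := by
  rw [Ordinal.add_one_eq_succ]; exact Order.lt_succ a

private lemma lt_succ_iff' {a b : Ordinal.{v}} : a < b + 1 ↔ a ≤ b := by
  rw [Ordinal.add_one_eq_succ]; exact Order.lt_succ_iff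

private lemma succ_ne_zero' (a : Ordinal.{v}) : a + 1 ≠ 0 := by
  rw [Ordinal.add_one_eq_succ]; exact (Order.succ_ne_bot a)

private lemma succ_exists (γ : Ordinal.{v}) : ∃ β < γ + 1, γ + 1 = β + 1 :=
  ⟨γ, lt_succ' γ, rfl⟩

private lemma limit_not_succ {o : Ordinal.{v}} (h : Order.IsSuccLimit o) : ¬ ∃ β < o, o = β + 1 := by
  rintro ⟨b, _, e⟩
  have hb : b < o := by rw [e]; exact lt_succ' b
  have := h.succ_lt hb
  rw [← Ordinal.add_one_eq_succ, ← e] at this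
  exact lt_irrefl _ this

private lemma succ_le_succ' {a b : Ordinal.{v}} (h : a + 1 ≤ b + 1) : a ≤ b := by
  rw [Ordinal.add_one_eq_succ, Ordinal.add_one_eq_succ] at h
  exact Order.succ_le_succ_iff.mp h

/-! ### pcomm algebra -/

private lemma pcomm_one_left (g : G) : pcomm (1:G) g = 1 := by simp [pcomm]

private lemma pcomm_swap (x y : G) : pcomm x y = (pcomm y x)⁻¹ := by
  simp [pcomm]; group

private lemma pcomm_mul_left (x y c : G) :
    pcomm (x*y) c = y⁻¹ * pcomm x c * y * pcomm y c := by simp [pcomm]; group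

private lemma pcomm_inv_left (x c : G) :
    pcomm x⁻¹ c = x * (pcomm x c)⁻¹ * x⁻¹ := by simp [pcomm]; group

private lemma pcomm_mul_right (a v w : G) :
    pcomm a (v*w) = pcomm a w * (w⁻¹ * pcomm a v * w) := by simp [pcomm]; group

private lemma pcomm_conj (x y h : G) :
    pcomm (x*y*x⁻¹) h = x * pcomm y (x⁻¹*h*x) * x⁻¹ := by simp [pcomm]; group

private lemma conj_in_eq (x h : G) : x⁻¹*h*x = h * (pcomm x h)⁻¹ := by simp [pcomm]; group

private lemma bwd_conj_eq (g c : G) : g⁻¹*c*g = pcomm g c⁻¹ * c := by simp [pcomm]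

private lemma pcomm_eq_conj (c k : G) : pcomm c k = c⁻¹ * (k⁻¹*c*k) := by simp [pcomm]; group

private lemma fwd_conj_eq (x u : G) : x*u*x⁻¹ = u * (x * pcomm u x * x⁻¹)⁻¹ := by
  simp [pcomm]; group

private lemma fwd_conj_eq' (x a : G) : x*a*x⁻¹ = a * (x * pcomm x a * x⁻¹) := by
  simp [pcomm]; group

private lemma pcomm_y_eq (y w : G) : pcomm y w = (y⁻¹ * w⁻¹ * y) * w := by simp [pcomm]

/-! ### Unfolding lemmas -/

lemma ZSet_zero (E : Set G) : ZSet E (0:Ordinal.{v}) = {1} := by rw [ZSet]; simp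

lemma ZSet_succ (E : Set G) (γ : Ordinal.{v}) :
    ZSet E (γ+1) = {x | x ∈ E ∧ ∀ g ∈ E, pcomm x g ∈ ZSet E γ} := by
  have hs := succ_exists γ
  rw [ZSet, if_neg (succ_ne_zero' γ), dif_pos hs]
  rw [show hs.choose = γ from succ_cancel hs.choose_spec.2.symm]

lemma mem_ZSet_succ {E : Set G} {γ : Ordinal.{v}} {x : G} :
    x ∈ ZSet E (γ+1) ↔ x ∈ E ∧ ∀ g ∈ E, pcomm x g ∈ ZSet E γ := by
  rw [ZSet_succ]; rfl

lemma ZSet_limit (E : Set G) {α : Ordinal.{v}} (h : Order.IsSuccLimit α) :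
    ZSet E α = ⋃ (β : Ordinal.{v}) (_ : β < α), ZSet E β := by
  rw [ZSet, if_neg h.ne_zero, dif_neg (limit_not_succ h)]

lemma CIter_zero (E : Set G) : CIter E S (0:Ordinal.{v}) = {1} := by rw [CIter]; simp

lemma CIter_succ (E : Set G) (γ : Ordinal.{v}) :
    CIter E S (γ+1) = {x | x ∈ E ∧
      (∀ β < γ+1, ∀ a : G, a ∈ CIter E S β ↔ x * a * x⁻¹ ∈ CIter E S β)
      ∧ ∀ h ∈ S, pcomm x h ∈ CIter E S γ} := by
  have hs := succ_exists γ
  rw [CIter, if_neg (succ_ne_zero' γ), dif_pos hs]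
  rw [show hs.choose = γ from succ_cancel hs.choose_spec.2.symm]

lemma mem_CIter_succ {E : Set G} {γ : Ordinal.{v}} {x : G} :
    x ∈ CIter E S (γ+1) ↔ x ∈ E ∧
      (∀ β < γ+1, ∀ a : G, a ∈ CIter E S β ↔ x * a * x⁻¹ ∈ CIter E S β)
      ∧ ∀ h ∈ S, pcomm x h ∈ CIter E S γ := by
  rw [CIter_succ]; rfl

lemma CIter_limit (E : Set G) {α : Ordinal.{v}} (h : Order.IsSuccLimit α) :
    CIter E S α = ⋃ (β : Ordinal.{v}) (_ : β < α), CIter E S β := by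
  rw [CIter, if_neg h.ne_zero, dif_neg (limit_not_succ h)]

lemma Env_zero : Env S (0:Ordinal.{v}) = Set.univ := by rw [Env]; simp

lemma Env_succ (γ : Ordinal.{v}) :
    Env S (γ+1) = {g | g ∈ Env S γ ∧
      ∀ c ∈ CIter (Env S γ) S (γ + 1), pcomm g c ∈ CIter (Env S γ) S γ} := by
  have hs := succ_exists γ
  rw [Env, if_neg (succ_ne_zero' γ), dif_pos hs]
  rw [show hs.choose = γ from succ_cancel hs.choose_spec.2.symm]

lemma mem_Env_succ {γ : Ordinal.{v}} {x : G} :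
    x ∈ Env S (γ+1) ↔ x ∈ Env S γ ∧
      ∀ c ∈ CIter (Env S γ) S (γ + 1), pcomm x c ∈ CIter (Env S γ) S γ := by
  rw [Env_succ]; rfl

lemma Env_limit {α : Ordinal.{v}} (h : Order.IsSuccLimit α) :
    Env S α = ⋂ (β : Ordinal.{v}) (_ : β < α), Env S β := by
  rw [Env, if_neg h.ne_zero, dif_neg (limit_not_succ h)]



/-! ### Basic membership facts -/

lemma one_mem_CIter {E : Set G} (h1 : (1:G) ∈ E) : ∀ β : Ordinal.{v}, (1:G) ∈ CIter E S β := by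
  intro β
  induction β using Ordinal.induction with
  | h β IH =>
    rcases Ordinal.zero_or_succ_or_isSuccLimit β with h0 | ⟨γ, hγ⟩ | hl
    · subst h0; rw [CIter_zero]; rfl
    · rw [← Ordinal.add_one_eq_succ] at hγ; subst hγ
      refine mem_CIter_succ.mpr ⟨h1, ?_, ?_⟩
      · intro β' _ a; simp
      · intro h hh; rw [pcomm_one_left]; exact IH γ (lt_succ' γ)
    · rw [CIter_limit E hl]
      have h0 : (0:Ordinal.{v}) < β := pos_iff_ne_zero.mpr hl.ne_zero
      exact Set.mem_iUnion₂.mpr ⟨0, h0, IH 0 h0⟩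

lemma CIter_sub {E : Set G} (h1 : (1:G) ∈ E) : ∀ β : Ordinal.{v}, CIter E S β ⊆ E := by
  intro β
  induction β using Ordinal.induction with
  | h β IH =>
    rcases Ordinal.zero_or_succ_or_isSuccLimit β with h0 | ⟨γ, hγ⟩ | hl
    · subst h0; rw [CIter_zero]; intro x hx; rw [Set.mem_singleton_iff] at hx; subst hx; exact h1
    · rw [← Ordinal.add_one_eq_succ] at hγ; subst hγ
      intro x hx; exact (mem_CIter_succ.mp hx).1
    · rw [CIter_limit E hl]
      intro x hx
      obtain ⟨γ, hγ, hxγ⟩ := Set.mem_iUnion₂.mp hx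
      exact IH γ hγ hxγ

lemma ZSet_sub {E : Set G} (h1 : (1:G) ∈ E) : ∀ β : Ordinal.{v}, ZSet E β ⊆ E := by
  intro β
  induction β using Ordinal.induction with
  | h β IH =>
    rcases Ordinal.zero_or_succ_or_isSuccLimit β with h0 | ⟨γ, hγ⟩ | hl
    · subst h0; rw [ZSet_zero]; intro x hx; rw [Set.mem_singleton_iff] at hx; subst hx; exact h1
    · rw [← Ordinal.add_one_eq_succ] at hγ; subst hγ
      intro x hx; exact (mem_ZSet_succ.mp hx).1
    · rw [ZSet_limit E hl]
      intro x hx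
      obtain ⟨γ, hγ, hxγ⟩ := Set.mem_iUnion₂.mp hx
      exact IH γ hγ hxγ

lemma one_mem_Env : ∀ lam : Ordinal.{v}, (1:G) ∈ Env S lam := by
  intro lam
  induction lam using Ordinal.induction with
  | h lam IH =>
    rcases Ordinal.zero_or_succ_or_isSuccLimit lam with h0 | ⟨γ, hγ⟩ | hl
    · subst h0; rw [Env_zero]; trivial
    · rw [← Ordinal.add_one_eq_succ] at hγ; subst hγ
      refine mem_Env_succ.mpr ⟨IH γ (lt_succ' γ), ?_⟩
      intro c _; rw [pcomm_one_left]
      exact one_mem_CIter (IH γ (lt_succ' γ)) γ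
    · rw [Env_limit hl]
      exact Set.mem_iInter₂.mpr fun γ hγ => IH γ hγ

lemma Env_antitone : ∀ lam : Ordinal.{v}, ∀ μ ≤ lam, Env S lam ⊆ Env S μ := by
  intro lam
  induction lam using Ordinal.induction with
  | h lam IH =>
    intro μ hμ
    rcases eq_or_lt_of_le hμ with rfl | hlt
    · exact subset_rfl
    rcases Ordinal.zero_or_succ_or_isSuccLimit lam with h0 | ⟨γ, hγ⟩ | hl
    · subst h0; exact absurd hlt ((fun hz => not_lt_zero hz))
    · rw [← Ordinal.add_one_eq_succ] at hγ; subst hγ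
      have h1 : Env S (γ+1) ⊆ Env S γ := fun x hx => (mem_Env_succ.mp hx).1
      exact h1.trans (IH γ (lt_succ' γ) μ (lt_succ_iff'.mp hlt))
    · intro x hx
      rw [Env_limit hl] at hx
      exact Set.mem_iInter₂.mp hx μ hlt

/-! ### Subgroup-closedness -/

def SubC (X : Set G) : Prop :=
  (1:G) ∈ X ∧ (∀ ⦃x⦄, x ∈ X → ∀ ⦃y⦄, y ∈ X → x*y ∈ X) ∧ (∀ ⦃x⦄, x ∈ X → x⁻¹ ∈ X)
    ∧ (∀ ⦃x⦄, x ∈ X → ∀ ⦃a⦄, a ∈ X → x*a*x⁻¹ ∈ X)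

/-- The master bundle: stability, survival, subgroupness and monotonicity. -/
def MP (S : Set G) (lam : Ordinal.{v}) : Prop :=
  (∀ μ ≤ lam, ∀ β ≤ μ, CIter (Env S lam) S β = CIter (Env S μ) S β) ∧
  (∀ β ≤ lam, CIter (Env S lam) S β ⊆ Env S (lam+1)) ∧
  (∀ β ≤ lam, SubC (CIter (Env S lam) S β)) ∧
  (∀ β β', β ≤ β' → β' ≤ lam + 1 → CIter (Env S lam) S β ⊆ CIter (Env S lam) S β')

/-! ### Parameterized helper lemmas -/

/-- Normalization: elements of higher centralizers normalize all lower ones. -/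
private lemma norm_of_mono {E : Set G} {Λ : Ordinal.{v}}
    (mono : ∀ β β', β ≤ β' → β' ≤ Λ → CIter E S β ⊆ CIter E S β') :
    ∀ γ ≤ Λ, ∀ x ∈ CIter E S γ, ∀ δ < γ, ∀ a : G,
      a ∈ CIter E S δ ↔ x*a*x⁻¹ ∈ CIter E S δ := by
  intro γ
  induction γ using Ordinal.induction with
  | h γ IH =>
    intro hγΛ x hx δ hδ a
    rcases Ordinal.zero_or_succ_or_isSuccLimit γ with h0 | ⟨π, hπ⟩ | hl
    · subst h0; exact absurd hδ ((fun hz => not_lt_zero hz))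
    · rw [← Ordinal.add_one_eq_succ] at hπ; subst hπ
      exact (mem_CIter_succ.mp hx).2.1 δ hδ a
    · rw [CIter_limit E hl] at hx
      obtain ⟨γ₀, hγ₀, hxγ₀⟩ := Set.mem_iUnion₂.mp hx
      rcases lt_or_ge δ γ₀ with h | h
      · exact IH γ₀ hγ₀ (le_of_lt (lt_of_lt_of_le hγ₀ hγΛ)) x hxγ₀ δ h a
      · have hδ1 : δ + 1 < γ := by rw [Ordinal.add_one_eq_succ]; exact hl.succ_lt hδ
        have hx' : x ∈ CIter E S (δ+1) :=
          mono γ₀ (δ+1) (h.trans (le_of_lt (lt_succ' δ))) (le_of_lt (hδ1.trans_le hγΛ)) hxγ₀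
        exact (mem_CIter_succ.mp hx').2.1 δ (lt_succ' δ) a

/-- Commutators with `S` stay at the same centralizer level. -/
private lemma comm_of_mono {E : Set G} {Λ : Ordinal.{v}}
    (mono : ∀ β β', β ≤ β' → β' ≤ Λ → CIter E S β ⊆ CIter E S β') :
    ∀ γ ≤ Λ, ∀ x ∈ CIter E S γ, ∀ h ∈ S, pcomm x h ∈ CIter E S γ := by
  intro γ
  induction γ using Ordinal.induction with
  | h γ IH =>
    intro hγΛ x hx h hh
    rcases Ordinal.zero_or_succ_or_isSuccLimit γ with h0 | ⟨π, hπ⟩ | hl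
    · subst h0; rw [CIter_zero] at hx ⊢
      rw [Set.mem_singleton_iff] at hx; subst hx
      rw [pcomm_one_left]; rfl
    · rw [← Ordinal.add_one_eq_succ] at hπ; subst hπ
      have := (mem_CIter_succ.mp hx).2.2 h hh
      exact mono π (π+1) (le_of_lt (lt_succ' π)) hγΛ this
    · rw [CIter_limit E hl] at hx ⊢
      obtain ⟨γ₀, hγ₀, hxγ₀⟩ := Set.mem_iUnion₂.mp hx
      exact Set.mem_iUnion₂.mpr ⟨γ₀, hγ₀,
        IH γ₀ hγ₀ (le_of_lt (lt_of_lt_of_le hγ₀ hγΛ)) x hxγ₀ h hh⟩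

/-- Backward conjugation/commutation: every element of the next envelope
normalizes (one-sidedly) the stable centralizer. -/
private lemma bwd {κ : Ordinal.{v}} (hκ : MP S κ) {g c : G} (hg : g ∈ Env S (κ+1))
    (hc : c ∈ CIter (Env S κ) S κ) :
    pcomm g c ∈ CIter (Env S κ) S κ ∧ g⁻¹*c*g ∈ CIter (Env S κ) S κ := by
  have hover : CIter (Env S κ) S κ ⊆ CIter (Env S κ) S (κ+1) :=
    hκ.2.2.2 κ (κ+1) (le_of_lt (lt_succ' κ)) le_rfl
  have sb := hκ.2.2.1 κ le_rfl
  have h1 : pcomm g c ∈ CIter (Env S κ) S κ := (mem_Env_succ.mp hg).2 c (hover hc)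
  refine ⟨h1, ?_⟩
  rw [bwd_conj_eq]
  exact sb.2.1 ((mem_Env_succ.mp hg).2 c⁻¹ (hover (sb.2.2.1 hc))) hc

/-- Envelopes are closed under multiplication. -/
private lemma env_mul {lam : Ordinal.{v}} (hIH : ∀ κ < lam, MP S κ) {x y : G}
    (hx : x ∈ Env S lam) (hy : y ∈ Env S lam) : x*y ∈ Env S lam := by
  suffices hkey : ∀ μ ≤ lam, x*y ∈ Env S μ from hkey lam le_rfl
  intro μ
  induction μ using Ordinal.induction with
  | h μ IH =>
    intro hμ
    rcases Ordinal.zero_or_succ_or_isSuccLimit μ with h0 | ⟨κ, hκ⟩ | hl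
    · subst h0; rw [Env_zero]; trivial
    · rw [← Ordinal.add_one_eq_succ] at hκ; subst hκ
      have hκlam : κ < lam := lt_of_lt_of_le (lt_succ' κ) hμ
      have hxκ : x ∈ Env S (κ+1) := Env_antitone lam (κ+1) hμ hx
      have hyκ : y ∈ Env S (κ+1) := Env_antitone lam (κ+1) hμ hy
      refine mem_Env_succ.mpr ⟨IH κ (lt_succ' κ) (le_of_lt hκlam), ?_⟩
      intro k hk
      rw [pcomm_mul_left]
      have hw : pcomm x k ∈ CIter (Env S κ) S κ := (mem_Env_succ.mp hxκ).2 k hk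
      have hv : pcomm y k ∈ CIter (Env S κ) S κ := (mem_Env_succ.mp hyκ).2 k hk
      have hcon : y⁻¹ * pcomm x k * y ∈ CIter (Env S κ) S κ :=
        (bwd (hIH κ hκlam) hyκ hw).2
      exact (hIH κ hκlam).2.2.1 κ le_rfl |>.2.1 hcon hv
    · rw [Env_limit hl]
      exact Set.mem_iInter₂.mpr fun γ hγ => IH γ hγ (le_of_lt (lt_of_lt_of_le hγ hμ))

/-- Envelopes are closed under inverses of elements that forwards-normalize
all stable centralizers. -/
private lemma env_inv {lam : Ordinal.{v}} (hIH : ∀ κ < lam, MP S κ) {x : G}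
    (hx : x ∈ Env S lam)
    (hn : ∀ κ < lam, ∀ a ∈ CIter (Env S κ) S κ, x*a*x⁻¹ ∈ CIter (Env S κ) S κ) :
    x⁻¹ ∈ Env S lam := by
  suffices hkey : ∀ μ ≤ lam, x⁻¹ ∈ Env S μ from hkey lam le_rfl
  intro μ
  induction μ using Ordinal.induction with
  | h μ IH =>
    intro hμ
    rcases Ordinal.zero_or_succ_or_isSuccLimit μ with h0 | ⟨κ, hκ⟩ | hl
    · subst h0; rw [Env_zero]; trivial
    · rw [← Ordinal.add_one_eq_succ] at hκ; subst hκ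
      have hκlam : κ < lam := lt_of_lt_of_le (lt_succ' κ) hμ
      have hxκ : x ∈ Env S (κ+1) := Env_antitone lam (κ+1) hμ hx
      refine mem_Env_succ.mpr ⟨IH κ (lt_succ' κ) (le_of_lt hκlam), ?_⟩
      intro k hk
      rw [pcomm_inv_left]
      have hw : pcomm x k ∈ CIter (Env S κ) S κ := (mem_Env_succ.mp hxκ).2 k hk
      have hwi : (pcomm x k)⁻¹ ∈ CIter (Env S κ) S κ :=
        (hIH κ hκlam).2.2.1 κ le_rfl |>.2.2.1 hw
      exact hn κ hκlam _ hwi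
    · rw [Env_limit hl]
      exact Set.mem_iInter₂.mpr fun γ hγ => IH γ hγ (le_of_lt (lt_of_lt_of_le hγ hμ))

private lemma subC_one : SubC ({1} : Set G) := by
  refine ⟨rfl, ?_, ?_, ?_⟩ <;>
  · intro x hx
    simp only [Set.mem_singleton_iff] at *
    subst hx
    first
    | (intro y hy; simp only [Set.mem_singleton_iff] at *; subst hy; simp)
    | simp

theorem master (S : Set G) : ∀ lam : Ordinal.{v}, MP S lam := by
  intro lam
  induction lam using Ordinal.induction with
  | h lam hIH =>
  -- Stability
  have st : ∀ μ ≤ lam, ∀ β ≤ μ, CIter (Env S lam) S β = CIter (Env S μ) S β := by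
    have key : ∀ β : Ordinal.{v}, ∀ μ, μ < lam → β ≤ μ →
        CIter (Env S lam) S β = CIter (Env S μ) S β := by
      intro β
      induction β using Ordinal.induction with
      | h β IHβ =>
        intro μ hμlam hβμ
        rcases Ordinal.zero_or_succ_or_isSuccLimit β with h0 | ⟨γ, hγ⟩ | hlb
        · subst h0; rw [CIter_zero, CIter_zero]
        · rw [← Ordinal.add_one_eq_succ] at hγ; subst hγ
          have hγμ : γ ≤ μ := le_of_lt (lt_of_lt_of_le (lt_succ' γ) hβμ)
          ext x
          constructor
          · intro hx
            obtain ⟨h1, h2, h3⟩ := mem_CIter_succ.mp hx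
            refine mem_CIter_succ.mpr ⟨Env_antitone lam μ (le_of_lt hμlam) h1, ?_, ?_⟩
            · intro β' hβ' a
              rw [← IHβ β' hβ' μ hμlam (le_trans (lt_succ_iff'.mp hβ') hγμ)]
              exact h2 β' hβ' a
            · intro h hh
              rw [← IHβ γ (lt_succ' γ) μ hμlam hγμ]
              exact h3 h hh
          · intro hx
            have hxE : x ∈ Env S lam := by
              rcases Ordinal.zero_or_succ_or_isSuccLimit lam with hl0 | ⟨ν, hν⟩ | hll
              · exact absurd hμlam (by subst hl0; exact (fun hz => not_lt_zero hz))
              · rw [← Ordinal.add_one_eq_succ] at hν; subst hν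
                have hμν : μ ≤ ν := lt_succ_iff'.mp hμlam
                have e := (hIH ν (lt_succ' ν)).1 μ hμν (γ+1) hβμ
                rw [← e] at hx
                exact (hIH ν (lt_succ' ν)).2.1 (γ+1) (le_trans hβμ hμν) hx
              · rw [Env_limit hll]
                refine Set.mem_iInter₂.mpr fun κ hκ => ?_
                rcases le_or_gt κ μ with h | h
                · exact Env_antitone μ κ h (CIter_sub (one_mem_Env μ) (γ+1) hx)
                · have e := (hIH κ hκ).1 μ (le_of_lt h) (γ+1) hβμ
                  rw [← e] at hx
                  exact CIter_sub (one_mem_Env κ) (γ+1) hx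
            obtain ⟨h1, h2, h3⟩ := mem_CIter_succ.mp hx
            refine mem_CIter_succ.mpr ⟨hxE, ?_, ?_⟩
            · intro β' hβ' a
              rw [IHβ β' hβ' μ hμlam (le_trans (lt_succ_iff'.mp hβ') hγμ)]
              exact h2 β' hβ' a
            · intro h hh
              rw [IHβ γ (lt_succ' γ) μ hμlam hγμ]
              exact h3 h hh
        · ext x
          rw [CIter_limit _ hlb, CIter_limit _ hlb]
          simp only [Set.mem_iUnion]
          constructor
          · rintro ⟨γ, hγ, hx⟩
            exact ⟨γ, hγ, by rwa [← IHβ γ hγ μ hμlam (le_trans (le_of_lt hγ) hβμ)]⟩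
          · rintro ⟨γ, hγ, hx⟩
            exact ⟨γ, hγ, by rwa [IHβ γ hγ μ hμlam (le_trans (le_of_lt hγ) hβμ)]⟩
    intro μ hμ β hβ
    rcases eq_or_lt_of_le hμ with rfl | h
    · rfl
    · exact key β μ h hβ
  -- Low subgroup-closedness
  have sbLow : ∀ β < lam, SubC (CIter (Env S lam) S β) := by
    intro β hβ
    rw [st β (le_of_lt hβ) β le_rfl]
    exact (hIH β hβ).2.2.1 β le_rfl
  -- Monotonicity up to lam
  have monoLow : ∀ β' ≤ lam, ∀ β ≤ β',
      CIter (Env S lam) S β ⊆ CIter (Env S lam) S β' := by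
    intro β'
    induction β' using Ordinal.induction with
    | h β' IHm =>
      intro hβ'lam β hββ'
      rcases eq_or_lt_of_le hββ' with rfl | hlt
      · exact subset_rfl
      rcases Ordinal.zero_or_succ_or_isSuccLimit β' with h0 | ⟨ε, hε⟩ | hlb
      · exact absurd hlt (by subst h0; exact (fun hz => not_lt_zero hz))
      · rw [← Ordinal.add_one_eq_succ] at hε; subst hε
        have hβε : β ≤ ε := lt_succ_iff'.mp hlt
        have hεlam : ε < lam := lt_of_lt_of_le (lt_succ' ε) hβ'lam
        have step1 : CIter (Env S lam) S β ⊆ CIter (Env S lam) S ε :=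
          IHm ε (lt_succ' ε) (le_of_lt hεlam) β hβε
        have SS : CIter (Env S lam) S ε ⊆ CIter (Env S lam) S (ε+1) := by
          rcases Ordinal.zero_or_succ_or_isSuccLimit ε with he0 | ⟨π, hπ⟩ | hle
          · subst he0
            intro x hx
            rw [CIter_zero] at hx
            rw [Set.mem_singleton_iff] at hx; subst hx
            exact one_mem_CIter (one_mem_Env lam) _
          · rw [← Ordinal.add_one_eq_succ] at hπ; subst hπ
            intro x hx
            obtain ⟨h1, h2, h3⟩ := mem_CIter_succ.mp hx
            have sbπ1 := sbLow (π+1) hεlam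
            refine mem_CIter_succ.mpr ⟨h1, ?_, ?_⟩
            · intro δ hδ a
              rcases eq_or_lt_of_le (lt_succ_iff'.mp hδ) with rfl | hδ'
              · constructor
                · intro ha; exact sbπ1.2.2.2 hx ha
                · intro hb
                  have := sbπ1.2.2.2 (sbπ1.2.2.1 hx) hb
                  rwa [show x⁻¹*(x*a*x⁻¹)*x⁻¹⁻¹ = a from by group] at this
              · exact h2 δ hδ' a
            · intro h hh
              exact IHm (π+1) (lt_succ' (π+1)) (le_of_lt hεlam) π
                (le_of_lt (lt_succ' π)) (h3 h hh)
          · intro x hx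
            rw [CIter_limit _ hle] at hx
            obtain ⟨γ, hγ, hxγ⟩ := Set.mem_iUnion₂.mp hx
            have hxE : x ∈ Env S lam := CIter_sub (one_mem_Env lam) γ hxγ
            have monoε : ∀ b b', b ≤ b' → b' ≤ ε →
                CIter (Env S lam) S b ⊆ CIter (Env S lam) S b' := by
              intro b b' hb hb'
              exact IHm b' (lt_of_le_of_lt hb' (lt_succ' ε)) (le_trans hb' (le_of_lt hεlam)) b hb
            refine mem_CIter_succ.mpr ⟨hxE, ?_, ?_⟩
            · intro δ hδ a
              rcases eq_or_lt_of_le (lt_succ_iff'.mp hδ) with rfl | hδε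
              · constructor
                · intro ha
                  rw [CIter_limit _ hle] at ha ⊢
                  obtain ⟨γ₁, hγ₁, haγ₁⟩ := Set.mem_iUnion₂.mp ha
                  have hm : max γ γ₁ < δ := max_lt hγ hγ₁
                  have hxm := monoε γ _ (le_max_left γ γ₁) (le_of_lt hm) hxγ
                  have ham := monoε γ₁ _ (le_max_right γ γ₁) (le_of_lt hm) haγ₁
                  exact Set.mem_iUnion₂.mpr ⟨_, hm,
                    (sbLow _ (hm.trans hεlam)).2.2.2 hxm ham⟩
                · intro hb
                  rw [CIter_limit _ hle] at hb ⊢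
                  obtain ⟨γ₂, hγ₂, hbγ₂⟩ := Set.mem_iUnion₂.mp hb
                  have hm : max γ γ₂ < δ := max_lt hγ hγ₂
                  have hxm := monoε γ _ (le_max_left γ γ₂) (le_of_lt hm) hxγ
                  have hxi := (sbLow _ (hm.trans hεlam)).2.2.1 hxm
                  have h' := (sbLow _ (hm.trans hεlam)).2.2.2 hxi
                    (monoε γ₂ _ (le_max_right γ γ₂) (le_of_lt hm) hbγ₂)
                  rw [show x⁻¹*(x*a*x⁻¹)*x⁻¹⁻¹ = a from by group] at h'
                  exact Set.mem_iUnion₂.mpr ⟨_, hm, h'⟩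
              · rcases lt_or_ge δ γ with h | h
                · exact norm_of_mono monoε γ (le_of_lt hγ) x hxγ δ h a
                · have hδ1 : δ + 1 ≤ ε := by
                    have : δ + 1 < ε := by
                      rw [Ordinal.add_one_eq_succ]; exact hle.succ_lt hδε
                    exact le_of_lt this
                  have hx' := monoε γ (δ+1) (h.trans (le_of_lt (lt_succ' δ))) hδ1 hxγ
                  exact (mem_CIter_succ.mp hx').2.1 δ (lt_succ' δ) a
            · intro h hh
              rw [CIter_limit _ hle]
              exact Set.mem_iUnion₂.mpr ⟨γ, hγ,
                comm_of_mono monoε γ (le_of_lt hγ) x hxγ h hh⟩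
        exact step1.trans SS
      · intro x hx
        rw [CIter_limit _ hlb]
        exact Set.mem_iUnion₂.mpr ⟨β, hlt, hx⟩
  -- Top-level subgroup-closedness
  have subTop : SubC (CIter (Env S lam) S lam) := by
    rcases Ordinal.zero_or_succ_or_isSuccLimit lam with hl0 | ⟨ν, hν⟩ | hll
    · subst hl0; rw [CIter_zero]; exact subC_one
    · rw [← Ordinal.add_one_eq_succ] at hν; subst hν
      have hνlam : ν < ν + 1 := lt_succ' ν
      have sbν : SubC (CIter (Env S (ν+1)) S ν) := sbLow ν hνlam
      have hnorm : ∀ x, x ∈ CIter (Env S (ν+1)) S (ν+1) → ∀ κ < ν+1,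
          ∀ a ∈ CIter (Env S κ) S κ, x*a*x⁻¹ ∈ CIter (Env S κ) S κ := by
        intro x hx κ hκ a ha
        have h2 := (mem_CIter_succ.mp hx).2.1 κ hκ a
        rw [st κ (le_of_lt hκ) κ le_rfl] at h2
        exact h2.mp ha
      have hInv : ∀ x, x ∈ CIter (Env S (ν+1)) S (ν+1) → x⁻¹ ∈ Env S (ν+1) := by
        intro x hx
        exact env_inv hIH (mem_CIter_succ.mp hx).1 (fun κ hκ a ha => hnorm x hx κ hκ a ha)
      refine ⟨one_mem_CIter (one_mem_Env (ν+1)) _, ?_, ?_, ?_⟩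
      · -- mul
        intro x hx y hy
        obtain ⟨hxE, hxiff, hxcom⟩ := mem_CIter_succ.mp hx
        obtain ⟨hyE, hyiff, hycom⟩ := mem_CIter_succ.mp hy
        refine mem_CIter_succ.mpr ⟨env_mul hIH hxE hyE, ?_, ?_⟩
        · intro δ hδ a
          rw [show (x*y)*a*(x*y)⁻¹ = x*(y*a*y⁻¹)*x⁻¹ from by group]
          exact (hyiff δ hδ a).trans (hxiff δ hδ (y*a*y⁻¹))
        · intro h hh
          rw [pcomm_mul_left]
          have hcon : y⁻¹ * pcomm x h * y ∈ CIter (Env S (ν+1)) S ν := by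
            refine (hyiff ν hνlam _).mpr ?_
            rw [show y*(y⁻¹*pcomm x h*y)*y⁻¹ = pcomm x h from by group]
            exact hxcom h hh
          exact sbν.2.1 hcon (hycom h hh)
      · -- inv
        intro x hx
        obtain ⟨hxE, hxiff, hxcom⟩ := mem_CIter_succ.mp hx
        refine mem_CIter_succ.mpr ⟨hInv x hx, ?_, ?_⟩
        · intro δ hδ a
          constructor
          · intro ha
            refine (hxiff δ hδ (x⁻¹*a*x⁻¹⁻¹)).mpr ?_
            rw [show x*(x⁻¹*a*x⁻¹⁻¹)*x⁻¹ = a from by group]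
            exact ha
          · intro hb
            have := (hxiff δ hδ (x⁻¹*a*x⁻¹⁻¹)).mp hb
            rwa [show x*(x⁻¹*a*x⁻¹⁻¹)*x⁻¹ = a from by group] at this
        · intro h hh
          rw [pcomm_inv_left]
          exact (hxiff ν hνlam _).mp (sbν.2.2.1 (hxcom h hh))
      · -- conj
        intro x hx a ha
        obtain ⟨hxE, hxiff, hxcom⟩ := mem_CIter_succ.mp hx
        obtain ⟨haE, haiff, hacom⟩ := mem_CIter_succ.mp ha
        refine mem_CIter_succ.mpr
          ⟨env_mul hIH (env_mul hIH hxE haE) (hInv x hx), ?_, ?_⟩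
        · intro δ hδ b
          have e1 : b ∈ CIter (Env S (ν+1)) S δ ↔
              x⁻¹*b*x⁻¹⁻¹ ∈ CIter (Env S (ν+1)) S δ := by
            constructor
            · intro hb
              refine (hxiff δ hδ (x⁻¹*b*x⁻¹⁻¹)).mpr ?_
              rw [show x*(x⁻¹*b*x⁻¹⁻¹)*x⁻¹ = b from by group]
              exact hb
            · intro hb
              have := (hxiff δ hδ (x⁻¹*b*x⁻¹⁻¹)).mp hb
              rwa [show x*(x⁻¹*b*x⁻¹⁻¹)*x⁻¹ = b from by group] at this
          rw [show (x*a*x⁻¹)*b*(x*a*x⁻¹)⁻¹ = x*(a*(x⁻¹*b*x⁻¹⁻¹)*a⁻¹)*x⁻¹ from by group]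
          exact (e1.trans (haiff δ hδ _)).trans (hxiff δ hδ _)
        · intro h hh
          rw [pcomm_conj, conj_in_eq, pcomm_mul_right]
          have hw' : (pcomm x h)⁻¹ ∈ CIter (Env S (ν+1)) S ν := sbν.2.2.1 (hxcom h hh)
          have h1 : pcomm a (pcomm x h)⁻¹ ∈ CIter (Env S (ν+1)) S ν := by
            rw [pcomm_y_eq]
            refine sbν.2.1 ?_ hw'
            refine (haiff ν hνlam _).mpr ?_
            rw [show a*(a⁻¹*((pcomm x h)⁻¹)⁻¹*a)*a⁻¹ = ((pcomm x h)⁻¹)⁻¹ from by group]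
            exact sbν.2.2.1 hw'
          have h2 : ((pcomm x h)⁻¹)⁻¹ * pcomm a h * (pcomm x h)⁻¹ ∈
              CIter (Env S (ν+1)) S ν := by
            have := sbν.2.2.2 (sbν.2.2.1 hw') (hacom h hh)
            rwa [inv_inv ((pcomm x h)⁻¹)] at this
          exact (hxiff ν hνlam _).mp (sbν.2.1 h1 h2)
    · -- lam limit
      have monoL : ∀ b b', b ≤ b' → b' ≤ lam →
          CIter (Env S lam) S b ⊆ CIter (Env S lam) S b' :=
        fun b b' hb hb' => monoLow b' hb' b hb
      refine ⟨one_mem_CIter (one_mem_Env lam) _, ?_, ?_, ?_⟩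
      · intro x hx y hy
        rw [CIter_limit _ hll] at hx hy ⊢
        obtain ⟨γ₁, hγ₁, hx₁⟩ := Set.mem_iUnion₂.mp hx
        obtain ⟨γ₂, hγ₂, hy₂⟩ := Set.mem_iUnion₂.mp hy
        have hm : max γ₁ γ₂ < lam := max_lt hγ₁ hγ₂
        exact Set.mem_iUnion₂.mpr ⟨_, hm, (sbLow _ hm).2.1
          (monoL γ₁ _ (le_max_left _ _) (le_of_lt hm) hx₁)
          (monoL γ₂ _ (le_max_right _ _) (le_of_lt hm) hy₂)⟩
      · intro x hx
        rw [CIter_limit _ hll] at hx ⊢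
        obtain ⟨γ₁, hγ₁, hx₁⟩ := Set.mem_iUnion₂.mp hx
        exact Set.mem_iUnion₂.mpr ⟨γ₁, hγ₁, (sbLow _ hγ₁).2.2.1 hx₁⟩
      · intro x hx a ha
        rw [CIter_limit _ hll] at hx ha ⊢
        obtain ⟨γ₁, hγ₁, hx₁⟩ := Set.mem_iUnion₂.mp hx
        obtain ⟨γ₂, hγ₂, ha₂⟩ := Set.mem_iUnion₂.mp ha
        have hm : max γ₁ γ₂ < lam := max_lt hγ₁ hγ₂
        exact Set.mem_iUnion₂.mpr ⟨_, hm, (sbLow _ hm).2.2.2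
          (monoL γ₁ _ (le_max_left _ _) (le_of_lt hm) hx₁)
          (monoL γ₂ _ (le_max_right _ _) (le_of_lt hm) ha₂)⟩
  have sbAll : ∀ β ≤ lam, SubC (CIter (Env S lam) S β) := by
    intro β hβ
    rcases eq_or_lt_of_le hβ with rfl | h
    · exact subTop
    · exact sbLow β h
  -- Overhang monotonicity
  have monoTop : CIter (Env S lam) S lam ⊆ CIter (Env S lam) S (lam+1) := by
    rcases Ordinal.zero_or_succ_or_isSuccLimit lam with hl0 | ⟨ν, hν⟩ | hll
    · subst hl0
      intro x hx
      rw [CIter_zero] at hx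
      rw [Set.mem_singleton_iff] at hx; subst hx
      exact one_mem_CIter (one_mem_Env 0) _
    · rw [← Ordinal.add_one_eq_succ] at hν; subst hν
      intro x hx
      obtain ⟨hxE, hxiff, hxcom⟩ := mem_CIter_succ.mp hx
      refine mem_CIter_succ.mpr ⟨hxE, ?_, ?_⟩
      · intro δ hδ a
        rcases eq_or_lt_of_le (lt_succ_iff'.mp hδ) with rfl | hδ'
        · constructor
          · intro ha; exact subTop.2.2.2 hx ha
          · intro hb
            have := subTop.2.2.2 (subTop.2.2.1 hx) hb
            rwa [show x⁻¹*(x*a*x⁻¹)*x⁻¹⁻¹ = a from by group] at this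
        · exact hxiff δ hδ' a
      · intro h hh
        exact monoLow (ν+1) le_rfl ν (le_of_lt (lt_succ' ν)) (hxcom h hh)
    · intro x hx
      have hxlim := hx
      rw [CIter_limit _ hll] at hxlim
      obtain ⟨γ, hγ, hxγ⟩ := Set.mem_iUnion₂.mp hxlim
      have monoL : ∀ b b', b ≤ b' → b' ≤ lam →
          CIter (Env S lam) S b ⊆ CIter (Env S lam) S b' :=
        fun b b' hb hb' => monoLow b' hb' b hb
      refine mem_CIter_succ.mpr ⟨CIter_sub (one_mem_Env lam) γ hxγ, ?_, ?_⟩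
      · intro δ hδ a
        rcases eq_or_lt_of_le (lt_succ_iff'.mp hδ) with rfl | hδ'
        · constructor
          · intro ha; exact subTop.2.2.2 hx ha
          · intro hb
            have := subTop.2.2.2 (subTop.2.2.1 hx) hb
            rwa [show x⁻¹*(x*a*x⁻¹)*x⁻¹⁻¹ = a from by group] at this
        · rcases lt_or_ge δ γ with h | h
          · exact norm_of_mono monoL γ (le_of_lt hγ) x hxγ δ h a
          · have hδ1 : δ + 1 ≤ lam := by
              have : δ + 1 < lam := by
                rw [Ordinal.add_one_eq_succ]; exact hll.succ_lt hδ'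
              exact le_of_lt this
            have hx' := monoL γ (δ+1) (h.trans (le_of_lt (lt_succ' δ))) hδ1 hxγ
            exact (mem_CIter_succ.mp hx').2.1 δ (lt_succ' δ) a
      · intro h hh
        rw [CIter_limit _ hll]
        exact Set.mem_iUnion₂.mpr ⟨γ, hγ, comm_of_mono monoL γ (le_of_lt hγ) x hxγ h hh⟩
  -- Full monotonicity
  have monoFull : ∀ β β', β ≤ β' → β' ≤ lam + 1 →
      CIter (Env S lam) S β ⊆ CIter (Env S lam) S β' := by
    intro β β' hββ' hβ'
    rcases eq_or_lt_of_le hβ' with rfl | h'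
    · rcases eq_or_lt_of_le hββ' with rfl | h
      · exact subset_rfl
      · exact (monoLow lam le_rfl β (lt_succ_iff'.mp h)).trans monoTop
    · exact monoLow β' (lt_succ_iff'.mp h') β hββ'
  -- Survival
  have sv : ∀ β ≤ lam, CIter (Env S lam) S β ⊆ Env S (lam+1) := by
    intro β hβ c hc
    refine mem_Env_succ.mpr ⟨CIter_sub (one_mem_Env lam) β hc, ?_⟩
    intro k hk
    rw [pcomm_eq_conj]
    have hkiff := (mem_CIter_succ.mp hk).2.1 β (lt_succ_iff'.mpr hβ) (k⁻¹*c*k)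
    have hkck : k⁻¹*c*k ∈ CIter (Env S lam) S β := by
      refine hkiff.mpr ?_
      rw [show k*(k⁻¹*c*k)*k⁻¹ = c from by group]
      exact hc
    have := (sbAll β hβ).2.1 ((sbAll β hβ).2.2.1 hc) hkck
    exact monoFull β lam hβ (le_of_lt (lt_succ' lam)) this
  exact ⟨st, sv, sbAll, monoFull⟩
/-! ### Corollaries of the master theorem -/

private lemma stEq {β μ : Ordinal.{v}} (h : β ≤ μ) :
    CIter (Env S μ) S β = CIter (Env S β) S β :=
  (master S μ).1 β h β le_rfl

private lemma sbStable (ρ : Ordinal.{v}) : SubC (CIter (Env S ρ) S ρ) :=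
  (master S ρ).2.2.1 ρ le_rfl

private lemma overhang (ρ : Ordinal.{v}) :
    CIter (Env S ρ) S ρ ⊆ CIter (Env S ρ) S (ρ+1) :=
  (master S ρ).2.2.2 ρ (ρ+1) (le_of_lt (lt_succ' ρ)) le_rfl

private lemma stableSubEnv (ρ μ : Ordinal.{v}) : CIter (Env S ρ) S ρ ⊆ Env S μ := by
  rcases le_or_gt ρ μ with h | h
  · rw [← stEq h]
    exact CIter_sub (one_mem_Env μ) ρ
  · exact (CIter_sub (one_mem_Env ρ) ρ).trans (Env_antitone ρ μ (le_of_lt h))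

private lemma S_sub_Env : ∀ β : Ordinal.{v}, S ⊆ Env S β := by
  intro β
  induction β using Ordinal.induction with
  | h β IH =>
    rcases Ordinal.zero_or_succ_or_isSuccLimit β with h0 | ⟨κ, hκ⟩ | hl
    · subst h0; rw [Env_zero]; exact Set.subset_univ S
    · rw [← Ordinal.add_one_eq_succ] at hκ; subst hκ
      intro h hh
      refine mem_Env_succ.mpr ⟨IH κ (lt_succ' κ) hh, ?_⟩
      intro k hk
      rw [pcomm_swap]
      exact (sbStable κ).2.2.1 ((mem_CIter_succ.mp hk).2.2 h hh)
    · rw [Env_limit hl]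
      intro h hh
      exact Set.mem_iInter₂.mpr fun κ hκ => IH κ hκ hh

/-- Forward conjugation by arbitrary (deep) envelope elements preserves
stable centralizers on hypercentral elements. -/
private lemma fwdz : ∀ δ : Ordinal.{v}, ∀ (μ ρ : Ordinal.{v}) (x u : G),
    (∀ β : Ordinal.{v}, x ∈ Env S β) → u ∈ ZSet (Env S μ) δ → u ∈ CIter (Env S ρ) S ρ →
    x*u*x⁻¹ ∈ CIter (Env S ρ) S ρ := by
  intro δ
  induction δ using Ordinal.induction with
  | h δ IH =>
    intro μ ρ x u hx hu huC
    rcases Ordinal.zero_or_succ_or_isSuccLimit δ with h0 | ⟨η, hη⟩ | hl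
    · subst h0
      rw [ZSet_zero] at hu
      rw [Set.mem_singleton_iff] at hu; subst hu
      rw [show x*1*x⁻¹ = (1:G) from by group]
      exact one_mem_CIter (one_mem_Env ρ) ρ
    · rw [← Ordinal.add_one_eq_succ] at hη; subst hη
      have hyZ : pcomm u x ∈ ZSet (Env S μ) η := (mem_ZSet_succ.mp hu).2 x (hx μ)
      have hyC : pcomm u x ∈ CIter (Env S ρ) S ρ := by
        rw [pcomm_swap]
        exact (sbStable ρ).2.2.1 ((mem_Env_succ.mp (hx (ρ+1))).2 u (overhang ρ huC))
      rw [fwd_conj_eq]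
      exact (sbStable ρ).2.1 huC ((sbStable ρ).2.2.1 (IH η (lt_succ' η) μ ρ x _ hx hyZ hyC))
    · rw [ZSet_limit _ hl] at hu
      obtain ⟨δ', hδ', hu'⟩ := Set.mem_iUnion₂.mp hu
      exact IH δ' hδ' μ ρ x u hx hu' huC

/-- The key induction: hypercentral elements of an envelope lie in every
envelope, and in every stable centralizer from their level on. -/
private lemma mega : ∀ σ : Ordinal.{v}, ∀ μ : Ordinal.{v}, σ ≤ μ → ∀ x ∈ ZSet (Env S μ) σ,
    (∀ β : Ordinal.{v}, x ∈ Env S β) ∧ (∀ β, σ ≤ β → x ∈ CIter (Env S β) S β) := by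
  intro σ
  induction σ using Ordinal.induction with
  | h σ IHσ =>
    intro μ hσμ x hx
    rcases Ordinal.zero_or_succ_or_isSuccLimit σ with h0 | ⟨δ, hδ⟩ | hl
    · subst h0
      rw [ZSet_zero] at hx
      rw [Set.mem_singleton_iff] at hx; subst hx
      exact ⟨fun β => one_mem_Env β, fun β _ => one_mem_CIter (one_mem_Env β) β⟩
    · rw [← Ordinal.add_one_eq_succ] at hδ; subst hδ
      have hδμ : δ < μ := lt_of_lt_of_le (lt_succ' δ) hσμ
      obtain ⟨hxEμ, hxZ⟩ := mem_ZSet_succ.mp hx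
      have M1 : ∀ β, x ∈ Env S β := by
        intro β
        induction β using Ordinal.induction with
        | h β IHb =>
          rcases Ordinal.zero_or_succ_or_isSuccLimit β with hb0 | ⟨κ, hκ⟩ | hbl
          · subst hb0; rw [Env_zero]; trivial
          · rw [← Ordinal.add_one_eq_succ] at hκ; subst hκ
            rcases le_or_gt (κ+1) μ with h | h
            · exact Env_antitone μ (κ+1) h hxEμ
            · have hμκ : μ ≤ κ := lt_succ_iff'.mp h
              refine mem_Env_succ.mpr ⟨IHb κ (lt_succ' κ), ?_⟩
              intro k hk
              have hkEμ : k ∈ Env S μ :=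
                Env_antitone κ μ hμκ (CIter_sub (one_mem_Env κ) (κ+1) hk)
              have hκδ : δ ≤ κ := le_trans (le_of_lt hδμ) hμκ
              exact (IHσ δ (lt_succ' δ) μ (le_of_lt hδμ) _ (hxZ k hkEμ)).2 κ hκδ
          · rw [Env_limit hbl]
            exact Set.mem_iInter₂.mpr fun κ hκ => IHb κ hκ
      have M2s : ∀ ε, δ ≤ ε → x ∈ CIter (Env S (ε+1)) S (ε+1) := by
        intro ε hδε
        refine mem_CIter_succ.mpr ⟨M1 (ε+1), ?_, ?_⟩
        · intro ρ hρ a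
          rw [stEq (le_of_lt hρ)]
          constructor
          · intro ha
            have hv : pcomm x a ∈ ZSet (Env S μ) δ := hxZ a (stableSubEnv ρ μ ha)
            have hvC : pcomm x a ∈ CIter (Env S ρ) S ρ :=
              (mem_Env_succ.mp (M1 (ρ+1))).2 a (overhang ρ ha)
            rw [fwd_conj_eq']
            exact (sbStable ρ).2.1 ha (fwdz δ μ ρ x _ M1 hv hvC)
          · intro hb
            have := (bwd (master S ρ) (M1 (ρ+1)) hb).2
            rwa [show x⁻¹*(x*a*x⁻¹)*x = a from by group] at this
        · intro h hh
          rw [stEq (le_of_lt (lt_succ' ε))]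
          exact (IHσ δ (lt_succ' δ) μ (le_of_lt hδμ) _ (hxZ h (S_sub_Env μ hh))).2 ε hδε
      refine ⟨M1, ?_⟩
      intro β hβ
      rcases Ordinal.zero_or_succ_or_isSuccLimit β with hb0 | ⟨ε, hε⟩ | hbl
      · exact absurd (lt_of_lt_of_le (lt_succ' δ) hβ)
          (by subst hb0; exact (fun hz => not_lt_zero hz))
      · rw [← Ordinal.add_one_eq_succ] at hε; subst hε
        exact M2s ε (succ_le_succ' hβ)
      · have hlt : δ + 1 < β := by
          rcases eq_or_lt_of_le hβ with he | h
          · exact absurd (limit_not_succ hbl)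
              (by rw [← he]; intro hc; exact hc ⟨δ, lt_succ' δ, rfl⟩)
          · exact h
        rw [CIter_limit _ hbl]
        refine Set.mem_iUnion₂.mpr ⟨δ+1, hlt, ?_⟩
        rw [stEq (le_of_lt hlt)]
        exact M2s δ le_rfl
    · rw [ZSet_limit _ hl] at hx
      obtain ⟨σ', hσ', hx'⟩ := Set.mem_iUnion₂.mp hx
      have h' := IHσ σ' hσ' μ (le_trans (le_of_lt hσ') hσμ) x hx'
      exact ⟨h'.1, fun β hβ => h'.2 β (le_trans (le_of_lt hσ') hβ)⟩

end Proofs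

theorem stmt11 {G : Type*} [Group G] (H : Subgroup G) (α lam : Ordinal) (h : α ≤ lam) :
    ZSet (Env (H : Set G) α) α ⊆ Env (H : Set G) lam := by
  intro x hx
  exact (mega α α le_rfl x hx).1 lam
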